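/- Let ν be an admissible profile and suppose y ∈ Ω is such that for every ε > 0, y ∉ S^{ν'_ε} (where ν'_ε(α') := ν'(α'-ε) and ν' is the dual profile of ν). Then there exists x ∈ S^ν with Σ_{(j,k)∈Λ} x_{j,k} ȳ_{j,k} = +∞ (the partial sums over scales are unbounded); hence the linear form ⟨·, y⟩ is not defined on all of S^ν. -/

import Mathlib

noncomputable section
open Filter Set Topology

/-- Clamp an extended real into `{-∞} ∪ [0,1]`. -/
def clamp (b : EReal) : EReal := if b < 0 then ⊥ else min b 1

/-- The dual profile `ν'(α') = ⌊⌊ α' + inf{α : ν(α) - α > α'} ⌋⌋` (with `inf ∅ = +∞`). -/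
def dualProfile (ν : ℝ → EReal) (a' : ℝ) : EReal :=
  clamp ((a' : EReal) +
    sInf ((fun a : ℝ => (a : EReal)) '' {a : ℝ | (a' : EReal) < ν a - (a : EReal)}))

/-- `log₂` of the number of coefficients of size `≥ 2^{-βj}` at scale `j`, divided by `j`
(with the convention `log₂ 0 = -∞`). -/
def logCount (x : ∀ j : ℕ, Fin (2 ^ j) → ℂ) (β : ℝ) (j : ℕ) : EReal :=
  if ({k : Fin (2 ^ j) | (2 : ℝ) ^ (-(β * (j : ℝ))) ≤ ‖x j k‖}.ncard) = 0 then ⊥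
  else ((Real.logb 2
    ({k : Fin (2 ^ j) | (2 : ℝ) ^ (-(β * (j : ℝ))) ≤ ‖x j k‖}.ncard) / (j : ℝ)
      : ℝ) : EReal)

/-- The asymptotic profile `ν_x` of a hierarchical sequence: the limit as `ε → 0⁺`
(i.e. the infimum over `ε > 0`, by monotonicity) of
`limsup_j (1/j) log₂ card{k : |x_{j,k}| ≥ 2^{-(α+ε)j}}`. -/
def asymProfile (x : ∀ j : ℕ, Fin (2 ^ j) → ℂ) (α : ℝ) : EReal :=
  sInf {L : EReal | ∃ ε : ℝ, 0 < ε ∧ L = Filter.limsup (logCount x (α + ε)) Filter.atTop}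

lemma logCount_le_one (x : ∀ j : ℕ, Fin (2 ^ j) → ℂ) (β : ℝ) (j : ℕ) :
    logCount x β j ≤ 1 := by
  unfold logCount
  split
  · exact bot_le
  · rename_i h
    have hcard : ({k : Fin (2 ^ j) | (2 : ℝ) ^ (-(β * (j : ℝ))) ≤ ‖x j k‖}.ncard) ≤ 2 ^ j := by
      simpa [Set.ncard_univ] using Set.ncard_le_ncard (Set.subset_univ {k : Fin (2 ^ j) | (2 : ℝ) ^ (-(β * (j : ℝ))) ≤ ‖x j k‖}) Set.finite_univ
    rcases Nat.eq_zero_or_pos j with hj | hj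
    · subst hj; simp
    · have h1 : Real.logb 2 ({k : Fin (2 ^ j) | (2 : ℝ) ^ (-(β * (j : ℝ))) ≤ ‖x j k‖}.ncard) ≤ j := by
        have : (({k : Fin (2 ^ j) | (2 : ℝ) ^ (-(β * (j : ℝ))) ≤ ‖x j k‖}.ncard : ℝ)) ≤ (2:ℝ) ^ (j:ℝ) := by
          rw [Real.rpow_natCast]
          exact_mod_cast hcard
        have hpos : (0:ℝ) < ({k : Fin (2 ^ j) | (2 : ℝ) ^ (-(β * (j : ℝ))) ≤ ‖x j k‖}.ncard : ℝ) := by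
          exact_mod_cast Nat.pos_of_ne_zero h
        exact (Real.logb_le_iff_le_rpow one_lt_two hpos).mpr this
      have : Real.logb 2 ({k : Fin (2 ^ j) | (2 : ℝ) ^ (-(β * (j : ℝ))) ≤ ‖x j k‖}.ncard) / (j : ℝ) ≤ 1 := by
        rw [div_le_one (by exact_mod_cast hj)]
        exact h1
      exact_mod_cast EReal.coe_le_coe_iff.mpr this

lemma logCount_bot_or_nonneg (x : ∀ j : ℕ, Fin (2 ^ j) → ℂ) (β : ℝ) (j : ℕ) :
    logCount x β j = ⊥ ∨ 0 ≤ logCount x β j := by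
  unfold logCount
  split
  · exact Or.inl rfl
  · rename_i h
    right
    have hpos : (1:ℝ) ≤ ({k : Fin (2 ^ j) | (2 : ℝ) ^ (-(β * (j : ℝ))) ≤ ‖x j k‖}.ncard : ℝ) := by
      exact_mod_cast Nat.pos_of_ne_zero h
    have : 0 ≤ Real.logb 2 ({k : Fin (2 ^ j) | (2 : ℝ) ^ (-(β * (j : ℝ))) ≤ ‖x j k‖}.ncard) / (j : ℝ) :=
      div_nonneg (Real.logb_nonneg one_lt_two hpos) (Nat.cast_nonneg j)
    exact_mod_cast EReal.coe_le_coe_iff.mpr this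

lemma limsup_bot_or_nonneg (u : ℕ → EReal) (h : ∀ j, u j = ⊥ ∨ 0 ≤ u j) :
    Filter.limsup u Filter.atTop = ⊥ ∨ 0 ≤ Filter.limsup u Filter.atTop := by
  by_cases hf : ∃ᶠ j in Filter.atTop, 0 ≤ u j
  · exact Or.inr (le_limsup_of_frequently_le hf)
  · left
    have hev : ∀ᶠ j in Filter.atTop, u j ≤ ⊥ := by
      filter_upwards [not_frequently.mp hf] with j hj
      rcases h j with h' | h'
      · exact h'.le
      · exact absurd h' hj
    exact le_bot_iff.mp (limsup_le_of_le (by isBoundedDefault) hev)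


lemma asymProfile_le_limsup (x : ∀ j : ℕ, Fin (2 ^ j) → ℂ) (α ε : ℝ) (hε : 0 < ε) :
    asymProfile x α ≤ Filter.limsup (logCount x (α + ε)) Filter.atTop :=
  sInf_le ⟨ε, hε, rfl⟩

lemma asymProfile_mono (x : ∀ j : ℕ, Fin (2 ^ j) → ℂ) : Monotone (asymProfile x) := by
  intro a b hab
  refine le_sInf ?_
  rintro L ⟨ε, hε, rfl⟩
  have : b + ε = a + (b - a + ε) := by ring
  rw [this]
  exact asymProfile_le_limsup x a _ (by linarith)

lemma asymProfile_le_one (x : ∀ j : ℕ, Fin (2 ^ j) → ℂ) (α : ℝ) : asymProfile x α ≤ 1 := by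
  refine le_trans (asymProfile_le_limsup x α 1 one_pos) ?_
  exact limsup_le_of_le (by isBoundedDefault)
    (Filter.Eventually.of_forall fun j => logCount_le_one x _ j)

lemma asymProfile_bot_or_nonneg (x : ∀ j : ℕ, Fin (2 ^ j) → ℂ) (α : ℝ) :
    asymProfile x α = ⊥ ∨ 0 ≤ asymProfile x α := by
  by_cases h : 0 ≤ asymProfile x α
  · exact Or.inr h
  · left
    have h' : asymProfile x α < 0 := lt_of_not_ge h
    obtain ⟨L, hLS, hL0⟩ := sInf_lt_iff.mp h'
    obtain ⟨ε, hε, rfl⟩ := hLS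
    have := limsup_bot_or_nonneg (logCount x (α + ε)) (fun j => logCount_bot_or_nonneg x _ j)
    rcases this with hb | hb
    · exact le_bot_iff.mp (le_trans (sInf_le ⟨ε, hε, rfl⟩) hb.le)
    · exact absurd hb (not_le.mpr hL0)

lemma EReal.le_coe_of_forall_lt (L : EReal) (c : ℝ) (h : ∀ d : ℝ, c < d → L ≤ (d : EReal)) :
    L ≤ (c : EReal) := by
  by_contra hc
  push_neg at hc
  obtain ⟨d, hd1, hd2⟩ := EReal.exists_between_coe_real hc
  exact absurd (h d (by exact_mod_cast hd1)) (not_le.mpr hd2)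

lemma construction (ν : ℝ → EReal) (hmono : Monotone ν)
    (y : ∀ j : ℕ, Fin (2 ^ j) → ℂ) (B c : ℝ) (hc : 0 ≤ c)
    (hνB : (c : EReal) ≤ ν B) (hf : (c : EReal) ≤ asymProfile y (c - B)) :
    ∃ x : ∀ j : ℕ, Fin (2 ^ j) → ℂ,
      (∀ α : ℝ, asymProfile x α ≤ ν α) ∧
      ¬ BddAbove (Set.range fun J : ℕ =>
        ∑ j ∈ Finset.range J, ∑ k : Fin (2 ^ j),
          (x j k * (starRingEnd ℂ) (y j k)).re) := by
  classical
  set α : ℝ := c - B with hα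
  -- Step 1: frequently large counts
  have hfreq : ∀ n N : ℕ, ∃ m, N ≤ m ∧
      ((c - 1/((n:ℝ)+1) : ℝ) : EReal) < logCount y (α + 1/((n:ℝ)+1)) m := by
    intro n N
    have hp : (0:ℝ) < 1/((n:ℝ)+1) := by positivity
    have h1 : ((c : ℝ) : EReal) ≤ Filter.limsup (logCount y (α + 1/((n:ℝ)+1))) Filter.atTop := by
      refine le_trans hf ?_
      exact asymProfile_le_limsup y α (1/((n:ℝ)+1)) hp
    by_contra hcon
    push_neg at hcon
    have hev : ∀ᶠ m in Filter.atTop, logCount y (α + 1/((n:ℝ)+1)) m ≤ ((c - 1/((n:ℝ)+1) : ℝ) : EReal) :=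
      Filter.eventually_atTop.mpr ⟨N, fun m hm => hcon m hm⟩
    have h2 := limsup_le_of_le (by isBoundedDefault) hev
    have hlt : ((c - 1/((n:ℝ)+1) : ℝ) : EReal) < ((c : ℝ) : EReal) := by
      exact_mod_cast show (c - 1/((n:ℝ)+1) : ℝ) < c by linarith
    exact absurd (le_trans h1 h2) (not_le.mpr hlt)
  choose φ hφ1 hφ2 using hfreq
  -- Step 3: scales
  set J : ℕ → ℕ := fun n => Nat.rec (φ 0 1) (fun k Jk => φ (k+1) (Jk+1)) n with hJdef
  have hJsuccd : ∀ n, J (n+1) = φ (n+1) (J n + 1) := fun n => rfl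
  have hJsucc : ∀ n, J n < J (n+1) := fun n => by
    rw [hJsuccd]; exact lt_of_lt_of_le (Nat.lt_succ_self _) (hφ1 (n+1) (J n + 1))
  have hJs : StrictMono J := strictMono_nat_of_lt_succ hJsucc
  have hJ1 : ∀ n, 1 ≤ J n := by
    intro n
    have h0 : 1 ≤ J 0 := hφ1 0 1
    exact le_trans h0 (hJs.monotone (Nat.zero_le n))
  have hJlog : ∀ n : ℕ, ((c - 1/((n:ℝ)+1) : ℝ) : EReal) < logCount y (α + 1/((n:ℝ)+1)) (J n) := by
    intro n
    cases n with
    | zero => exact hφ2 0 1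
    | succ k => rw [hJsuccd]; exact hφ2 (k+1) (J k + 1)
  -- the block index of a scale
  set nn : ℕ → ℕ := fun j => if h : ∃ n, J n = j then h.choose else 0 with hnndef
  have hJnn : ∀ j (h : ∃ n, J n = j), J (nn j) = j := by
    intro j h
    simp only [hnndef, dif_pos h]
    exact h.choose_spec
  have hnnJ : ∀ n, nn (J n) = n := by
    intro n
    exact hJs.injective (hJnn (J n) ⟨n, rfl⟩)
  -- Step 4: counts at block scales
  set Sy : ∀ j : ℕ, Set (Fin (2^j)) := fun j =>
    {k | (2:ℝ) ^ (-((α + 1/((nn j : ℝ)+1)) * (j:ℝ))) ≤ ‖y j k‖} with hSydef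
  set M : ℕ → ℕ := fun j =>
    if ∃ n, J n = j then ⌈(2:ℝ) ^ ((c - 1/((nn j : ℝ)+1)) * (j:ℝ))⌉₊ else 0 with hMdef
  have hcount : ∀ n : ℕ, (2:ℝ) ^ ((c - 1/((n:ℝ)+1)) * (J n : ℝ)) < ((Sy (J n)).ncard : ℝ) := by
    intro n
    have hlog := hJlog n
    have hSyeq : Sy (J n) =
        {k : Fin (2 ^ (J n)) | (2:ℝ) ^ (-((α + 1/((n:ℝ)+1)) * ((J n : ℕ):ℝ))) ≤ ‖y (J n) k‖} := by
      rw [hSydef]; simp only [hnnJ n]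
    rw [hSyeq]
    unfold logCount at hlog
    split_ifs at hlog with h0
    · exact absurd hlog (by simp)
    · have hreal : (c - 1/((n:ℝ)+1)) < Real.logb 2
          (({k : Fin (2 ^ (J n)) | (2:ℝ) ^ (-((α + 1/((n:ℝ)+1)) * ((J n : ℕ):ℝ))) ≤ ‖y (J n) k‖}.ncard : ℝ)) / ((J n : ℕ):ℝ) := by
        exact_mod_cast hlog
      have hJpos : (0:ℝ) < ((J n : ℕ):ℝ) := by exact_mod_cast hJ1 n
      have hcpos : (0:ℝ) < (({k : Fin (2 ^ (J n)) | (2:ℝ) ^ (-((α + 1/((n:ℝ)+1)) * ((J n : ℕ):ℝ))) ≤ ‖y (J n) k‖}.ncard : ℝ)) := by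
        exact_mod_cast Nat.pos_of_ne_zero h0
      have h2 : (c - 1/((n:ℝ)+1)) * ((J n : ℕ):ℝ) < Real.logb 2
          (({k : Fin (2 ^ (J n)) | (2:ℝ) ^ (-((α + 1/((n:ℝ)+1)) * ((J n : ℕ):ℝ))) ≤ ‖y (J n) k‖}.ncard : ℝ)) :=
        (lt_div_iff₀ hJpos).mp hreal
      exact (Real.lt_logb_iff_rpow_lt one_lt_two hcpos).mp h2
  have hMle : ∀ j, M j ≤ (Sy j).ncard := by
    intro j
    simp only [hMdef]
    split_ifs with h
    · obtain ⟨n, hn⟩ := h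
      subst hn
      rw [hnnJ n]
      exact Nat.ceil_le.mpr (le_of_lt (hcount n))
    · exact Nat.zero_le _
  have hM1 : ∀ n : ℕ, 1 ≤ M (J n) := by
    intro n
    simp only [hMdef]
    rw [if_pos ⟨n, rfl⟩]
    exact Nat.one_le_iff_ne_zero.mpr (by
      simp only [ne_eq, Nat.ceil_eq_zero, not_le]
      positivity)
  -- Step 5: choose the supports
  choose T hT1 hT2 using fun j => Set.exists_subset_card_eq (hMle j)
  -- the sequence x
  set Bx : ℕ → ℝ := fun j => B - 2/((nn j : ℝ)+1) with hBxdef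
  set x : ∀ j : ℕ, Fin (2^j) → ℂ := fun j k =>
    if k ∈ T j then (((2:ℝ) ^ (-(Bx j * (j:ℝ))) : ℝ) : ℂ) * (y j k / ((‖y j k‖ : ℝ) : ℂ))
    else 0 with hxdef
  have hxmem : ∀ j k, k ∈ T j →
      x j k = (((2:ℝ) ^ (-(Bx j * (j:ℝ))) : ℝ) : ℂ) * (y j k / ((‖y j k‖ : ℝ) : ℂ)) := by
    intro j k hk
    simp only [hxdef, if_pos hk]
  have hxnot : ∀ j k, k ∉ T j → x j k = 0 := by
    intro j k hk
    simp only [hxdef, if_neg hk]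
  have hy0 : ∀ j k, k ∈ T j → ‖y j k‖ ≠ 0 := by
    intro j k hk
    have := hT1 j hk
    rw [hSydef] at this
    have h2 : (0:ℝ) < (2:ℝ) ^ (-((α + 1/((nn j : ℝ)+1)) * (j:ℝ))) := by positivity
    exact ne_of_gt (lt_of_lt_of_le h2 this)
  have hxabs : ∀ j k, k ∈ T j → ‖x j k‖ = (2:ℝ) ^ (-(Bx j * (j:ℝ))) := by
    intro j k hk
    rw [hxmem j k hk]
    rw [norm_mul, norm_div]
    rw [Complex.norm_real, Complex.norm_real, Real.norm_eq_abs, Real.norm_eq_abs]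
    rw [abs_of_nonneg (le_of_lt (by positivity : (0:ℝ) < (2:ℝ) ^ (-(Bx j * (j:ℝ)))))]
    rw [abs_of_nonneg (norm_nonneg _)]
    rw [div_self (hy0 j k hk), mul_one]
  have hre : ∀ j k, (x j k * (starRingEnd ℂ) (y j k)).re =
      if k ∈ T j then (2:ℝ) ^ (-(Bx j * (j:ℝ))) * ‖y j k‖ else 0 := by
    intro j k
    by_cases hk : k ∈ T j
    · rw [if_pos hk, hxmem j k hk]
      have hy0' : ((‖y j k‖ : ℝ) : ℂ) ≠ 0 := by
        exact_mod_cast hy0 j k hk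
      have key : (((2:ℝ) ^ (-(Bx j * (j:ℝ))) : ℝ) : ℂ) * (y j k / ((‖y j k‖ : ℝ) : ℂ)) *
          (starRingEnd ℂ) (y j k) =
          ((((2:ℝ) ^ (-(Bx j * (j:ℝ))) * ‖y j k‖) : ℝ) : ℂ) := by
        have hmc : y j k * (starRingEnd ℂ) (y j k) = ((‖y j k‖ ^ 2 : ℝ) : ℂ) := by
          rw [Complex.mul_conj]
          norm_cast
          rw [Complex.sq_norm]
        calc (((2:ℝ) ^ (-(Bx j * (j:ℝ))) : ℝ) : ℂ) * (y j k / ((‖y j k‖ : ℝ) : ℂ)) *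
            (starRingEnd ℂ) (y j k)
            = (((2:ℝ) ^ (-(Bx j * (j:ℝ))) : ℝ) : ℂ) * ((y j k * (starRingEnd ℂ) (y j k)) / ((‖y j k‖ : ℝ) : ℂ)) := by
              ring
          _ = (((2:ℝ) ^ (-(Bx j * (j:ℝ))) : ℝ) : ℂ) * (((‖y j k‖ ^ 2 : ℝ) : ℂ) / ((‖y j k‖ : ℝ) : ℂ)) := by
              rw [hmc]
          _ = ((((2:ℝ) ^ (-(Bx j * (j:ℝ))) * ‖y j k‖) : ℝ) : ℂ) := by
              rw [show ((‖y j k‖ ^ 2 : ℝ) : ℂ) = ((‖y j k‖ : ℝ) : ℂ) ^ 2 by norm_cast]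
              field_simp
              push_cast; ring
      rw [key, Complex.ofReal_re]
    · rw [if_neg hk, hxnot j k hk, zero_mul, Complex.zero_re]
  have hterm_nonneg : ∀ j k, 0 ≤ (x j k * (starRingEnd ℂ) (y j k)).re := by
    intro j k
    rw [hre]
    split_ifs with hk
    · exact mul_nonneg (le_of_lt (by positivity)) (norm_nonneg _)
    · exact le_refl 0
  have hinner : ∀ n : ℕ, (1:ℝ) ≤ ∑ k : Fin (2^(J n)), (x (J n) k * (starRingEnd ℂ) (y (J n) k)).re := by
    intro n
    have hjr : (0:ℝ) < ((J n : ℕ) : ℝ) := by exact_mod_cast hJ1 n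
    set j := J n with hj
    set C : ℝ := (2:ℝ) ^ (-(Bx j * (j:ℝ))) * (2:ℝ) ^ (-((α + 1/((nn j : ℝ)+1)) * (j:ℝ))) with hC
    have hstep1 : ∑ k : Fin (2^j), (if k ∈ T j then C else 0)
        ≤ ∑ k : Fin (2^j), (x j k * (starRingEnd ℂ) (y j k)).re := by
      refine Finset.sum_le_sum ?_
      intro k _
      rw [hre]
      split_ifs with hk
      · refine mul_le_mul_of_nonneg_left ?_ (le_of_lt (by positivity))
        have := hT1 j hk
        rw [hSydef] at this
        exact this
      · exact le_refl 0
    have hstep2 : ∑ k : Fin (2^j), (if k ∈ T j then C else 0) = ((M j : ℝ)) * C := by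
      calc ∑ k : Fin (2^j), (if k ∈ T j then C else 0)
          = ∑ k : Fin (2^j), (if k ∈ (T j).toFinset then C else 0) := by
            simp [Set.mem_toFinset]
        _ = ∑ _k ∈ Finset.univ ∩ (T j).toFinset, C := Finset.sum_ite_mem _ _ _
        _ = ((T j).toFinset.card : ℝ) * C := by
            rw [Finset.univ_inter, Finset.sum_const, nsmul_eq_mul]
        _ = ((M j : ℝ)) * C := by
            rw [← Set.ncard_eq_toFinset_card', hT2 j]
    have hMge : (2:ℝ) ^ ((c - 1/((nn j : ℝ)+1)) * (j:ℝ)) ≤ (M j : ℝ) := by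
      have : M j = ⌈(2:ℝ) ^ ((c - 1/((nn j : ℝ)+1)) * (j:ℝ))⌉₊ := by
        simp only [hMdef]
        rw [if_pos ⟨n, hj.symm⟩]
      rw [this]
      exact Nat.le_ceil _
    have hfinal : (1:ℝ) ≤ ((M j : ℝ)) * C := by
      have hCpos : (0:ℝ) < C := by rw [hC]; positivity
      have h1 : (2:ℝ) ^ ((c - 1/((nn j : ℝ)+1)) * (j:ℝ)) * C ≤ ((M j : ℝ)) * C :=
        mul_le_mul_of_nonneg_right hMge (le_of_lt hCpos)
      refine le_trans ?_ h1
      rw [hC, ← Real.rpow_add two_pos, ← Real.rpow_add two_pos]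
      have hexp : (c - 1/((nn j : ℝ)+1)) * (j:ℝ) + (-(Bx j * (j:ℝ)) + -((α + 1/((nn j : ℝ)+1)) * (j:ℝ))) = 0 := by
        simp only [hBxdef, hα]
        ring
      rw [hexp, Real.rpow_zero]
    calc (1:ℝ) ≤ ((M j : ℝ)) * C := hfinal
      _ = ∑ k : Fin (2^j), (if k ∈ T j then C else 0) := hstep2.symm
      _ ≤ _ := hstep1
  have hsum : ∀ N : ℕ, ((N:ℝ)+1) ≤ ∑ j ∈ Finset.range (J N + 1),
      ∑ k : Fin (2^j), (x j k * (starRingEnd ℂ) (y j k)).re := by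
    intro N
    have hsub : (Finset.range (N+1)).image J ⊆ Finset.range (J N + 1) := by
      intro j hj
      obtain ⟨n, hn, rfl⟩ := Finset.mem_image.mp hj
      have : n ≤ N := Nat.lt_succ_iff.mp (Finset.mem_range.mp hn)
      exact Finset.mem_range.mpr (Nat.lt_succ_of_le (hJs.monotone this))
    have h1 : ∑ j ∈ (Finset.range (N+1)).image J,
        (∑ k : Fin (2^j), (x j k * (starRingEnd ℂ) (y j k)).re)
        ≤ ∑ j ∈ Finset.range (J N + 1),
        (∑ k : Fin (2^j), (x j k * (starRingEnd ℂ) (y j k)).re) := by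
      refine Finset.sum_le_sum_of_subset_of_nonneg hsub ?_
      intro j _ _
      exact Finset.sum_nonneg fun k _ => hterm_nonneg j k
    have h2 : ∑ j ∈ (Finset.range (N+1)).image J,
        (∑ k : Fin (2^j), (x j k * (starRingEnd ℂ) (y j k)).re)
        = ∑ n ∈ Finset.range (N+1), ∑ k : Fin (2^(J n)), (x (J n) k * (starRingEnd ℂ) (y (J n) k)).re := by
      rw [Finset.sum_image]
      intro a _ b _ hab
      exact hJs.injective hab
    have h3 : ((N:ℝ)+1) ≤ ∑ n ∈ Finset.range (N+1),
        ∑ k : Fin (2^(J n)), (x (J n) k * (starRingEnd ℂ) (y (J n) k)).re := by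
      have := Finset.sum_le_sum (fun n (_ : n ∈ Finset.range (N+1)) => hinner n)
      rw [Finset.sum_const, Finset.card_range, nsmul_eq_mul, mul_one] at this
      exact le_trans (by push_cast; linarith) this
    rw [h2] at h1
    exact le_trans h3 h1
  refine ⟨x, ?_, ?_⟩
  · intro α'
    by_cases hcase : α' < B
    · -- small α' : the profile of x is ⊥ there
      set ε'' : ℝ := (B - α')/2 with hε''
      have hε''pos : 0 < ε'' := by rw [hε'']; linarith
      obtain ⟨n₀, hn₀⟩ := exists_nat_gt (2/ε'')
      have hev : ∀ᶠ j in Filter.atTop, logCount x (α' + ε'') j ≤ ⊥ := by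
        rw [Filter.eventually_atTop]
        refine ⟨J n₀, ?_⟩
        intro j hj
        unfold logCount
        rw [if_pos]
        rw [Set.ncard_eq_zero (Set.toFinite _)]
        ext k
        simp only [Set.mem_setOf_eq, Set.mem_empty_iff_false, iff_false, not_le]
        by_cases hk : k ∈ T j
        · have hblock : ∃ n, J n = j := by
            by_contra hno
            have hM0 : M j = 0 := by simp only [hMdef]; rw [if_neg hno]
            have hTe : T j = ∅ := by
              rw [← Set.ncard_eq_zero (Set.toFinite _), hT2 j, hM0]
            rw [hTe] at hk
            exact hk
          have hJj : J (nn j) = j := hJnn j hblock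
          have hn₀le : n₀ ≤ nn j := by
            have : J n₀ ≤ J (nn j) := by rw [hJj]; exact hj
            exact hJs.le_iff_le.mp this
          have hnnr : (n₀:ℝ) ≤ ((nn j : ℕ):ℝ) := by exact_mod_cast hn₀le
          have h2eps : 2/(((nn j : ℕ):ℝ)+1) < ε'' := by
            rw [div_lt_iff₀ (by linarith : (0:ℝ) < ((nn j : ℕ):ℝ)+1)]
            have h1 : 2 < ε'' * (n₀:ℝ) := by
              rw [div_lt_iff₀ hε''pos] at hn₀
              linarith [hn₀]
            nlinarith
          have hBx : α' + ε'' < Bx j := by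
            simp only [hBxdef]
            have : α' + ε'' = B - 2 * ε'' + ε'' := by rw [hε'']; ring
            linarith
          rw [hxabs j k hk]
          apply Real.rpow_lt_rpow_of_exponent_lt one_lt_two
          have hj1 : (1:ℝ) ≤ (j:ℝ) := by exact_mod_cast (hJj ▸ hJ1 (nn j))
          nlinarith
        · rw [hxnot j k hk]
          simp only [norm_zero]
          positivity
      have hlimsup : Filter.limsup (logCount x (α' + ε'')) Filter.atTop ≤ ⊥ :=
        limsup_le_of_le (by isBoundedDefault) hev
      exact le_trans (le_trans (asymProfile_le_limsup x α' ε'' hε''pos) hlimsup) bot_le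
    · push_neg at hcase
      have hstep : asymProfile x α' ≤ (c : EReal) := by
        refine le_trans (asymProfile_le_limsup x α' 1 one_pos) ?_
        refine EReal.le_coe_of_forall_lt _ c ?_
        intro d hd
        have hdc : (0:ℝ) < d - c := by linarith
        refine limsup_le_of_le (by isBoundedDefault) ?_
        rw [Filter.eventually_atTop]
        refine ⟨⌈1/(d - c)⌉₊ + 1, ?_⟩
        intro j hj
        have hjr : (1:ℝ) ≤ (j:ℝ) := by
          have : 1 ≤ j := le_trans (Nat.le_add_left 1 _) hj
          exact_mod_cast this
        have hjpos : (0:ℝ) < (j:ℝ) := by linarith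
        unfold logCount
        split_ifs with h0
        · exact bot_le
        · have hsub : {k : Fin (2 ^ j) | (2 : ℝ) ^ (-((α' + 1) * (j : ℝ))) ≤ ‖x j k‖} ⊆ T j := by
            intro k hk
            simp only [Set.mem_setOf_eq] at hk
            by_contra hkn
            rw [hxnot j k hkn] at hk
            simp only [norm_zero] at hk
            exact absurd hk (not_le.mpr (by positivity))
          have hcnt_le : ({k : Fin (2 ^ j) | (2 : ℝ) ^ (-((α' + 1) * (j : ℝ))) ≤ ‖x j k‖}).ncard ≤ M j := by
            rw [← hT2 j]
            exact Set.ncard_le_ncard hsub (Set.toFinite _)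
          have hblock : ∃ n, J n = j := by
            by_contra hno
            have hM0 : M j = 0 := by simp only [hMdef]; rw [if_neg hno]
            rw [hM0, Nat.le_zero] at hcnt_le
            exact h0 hcnt_le
          have hMj : M j = ⌈(2:ℝ) ^ ((c - 1/(((nn j : ℕ):ℝ)+1)) * (j:ℝ))⌉₊ := by
            simp only [hMdef]
            rw [if_pos hblock]
          have hpow1 : (2:ℝ) ^ ((c - 1/(((nn j : ℕ):ℝ)+1)) * (j:ℝ)) ≤ (2:ℝ) ^ (c * (j:ℝ)) := by
            apply Real.rpow_le_rpow_of_exponent_le one_le_two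
            have hp : (0:ℝ) < 1/(((nn j : ℕ):ℝ)+1) := by positivity
            nlinarith
          have hcnt_real : (({k : Fin (2 ^ j) | (2 : ℝ) ^ (-((α' + 1) * (j : ℝ))) ≤ ‖x j k‖}).ncard : ℝ)
              ≤ (2:ℝ) ^ (c * (j:ℝ)) * 2 := by
            have h1 : (({k : Fin (2 ^ j) | (2 : ℝ) ^ (-((α' + 1) * (j : ℝ))) ≤ ‖x j k‖}).ncard : ℝ)
                ≤ (M j : ℝ) := by exact_mod_cast hcnt_le
            have h2 : (M j : ℝ) < (2:ℝ) ^ ((c - 1/(((nn j : ℕ):ℝ)+1)) * (j:ℝ)) + 1 := by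
              rw [hMj]
              exact Nat.ceil_lt_add_one (by positivity)
            have h3 : (1:ℝ) ≤ (2:ℝ) ^ (c * (j:ℝ)) := by
              rw [show (1:ℝ) = (2:ℝ) ^ (0:ℝ) by rw [Real.rpow_zero]]
              exact Real.rpow_le_rpow_of_exponent_le one_le_two (by positivity)
            nlinarith
          have hcpos : (0:ℝ) < (({k : Fin (2 ^ j) | (2 : ℝ) ^ (-((α' + 1) * (j : ℝ))) ≤ ‖x j k‖}).ncard : ℝ) := by
            exact_mod_cast Nat.pos_of_ne_zero h0
          have hlogb : Real.logb 2 (({k : Fin (2 ^ j) | (2 : ℝ) ^ (-((α' + 1) * (j : ℝ))) ≤ ‖x j k‖}).ncard : ℝ)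
              ≤ c * (j:ℝ) + 1 := by
            have := Real.logb_le_logb_of_le (one_lt_two) hcpos hcnt_real
            refine le_trans this ?_
            rw [Real.logb_mul (by positivity) (by norm_num)]
            rw [Real.logb_rpow (by norm_num : (0:ℝ) < 2) (by norm_num : (2:ℝ) ≠ 1)]
            simp [Real.logb_self_eq_one]
          have hdiv : Real.logb 2 (({k : Fin (2 ^ j) | (2 : ℝ) ^ (-((α' + 1) * (j : ℝ))) ≤ ‖x j k‖}).ncard : ℝ) / (j:ℝ) ≤ d := by
            rw [div_le_iff₀ hjpos]
            have hinvj : 1 ≤ (d - c) * (j:ℝ) := by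
              have hceil : 1/(d-c) ≤ ((⌈1/(d - c)⌉₊ : ℕ):ℝ) := Nat.le_ceil _
              have hjge : ((⌈1/(d - c)⌉₊ : ℕ):ℝ) ≤ (j:ℝ) := by
                exact_mod_cast le_trans (Nat.le_succ _) hj
              have : 1/(d-c) ≤ (j:ℝ) := le_trans hceil hjge
              rw [div_le_iff₀ hdc] at this
              nlinarith
            nlinarith
          exact_mod_cast EReal.coe_le_coe_iff.mpr hdiv
      exact le_trans hstep (le_trans hνB (hmono hcase))
  · rintro ⟨b, hb⟩
    have hmem : (∑ j ∈ Finset.range (J ⌈b⌉₊ + 1),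
        ∑ k : Fin (2^j), (x j k * (starRingEnd ℂ) (y j k)).re) ∈
        Set.range fun Jc : ℕ => ∑ j ∈ Finset.range Jc, ∑ k : Fin (2 ^ j),
          (x j k * (starRingEnd ℂ) (y j k)).re := ⟨J ⌈b⌉₊ + 1, rfl⟩
    have hle := hb hmem
    have hge := hsum ⌈b⌉₊
    have : b < (⌈b⌉₊ : ℝ) + 1 := lt_of_le_of_lt (Nat.le_ceil b) (by linarith)
    linarith

lemma claim (ν : ℝ → EReal)
    (hmono : Monotone ν)
    (hrc : ∀ a : ℝ, ContinuousWithinAt ν (Set.Ici a) a)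
    (hval : ∀ a : ℝ, ν a = ⊥ ∨ (0 ≤ ν a ∧ ν a ≤ 1))
    (hne : ∃ a : ℝ, ν a ≠ ⊥)
    (y : ∀ j : ℕ, Fin (2 ^ j) → ℂ)
    (hy : ∀ ε : ℝ, 0 < ε → ¬ (∀ α : ℝ, asymProfile y α ≤ dualProfile ν (α - ε))) :
    ∃ B c : ℝ, 0 ≤ c ∧ (c : EReal) ≤ ν B ∧ (c : EReal) ≤ asymProfile y (c - B) := by
  classical
  have hν0 : ∀ a, ν a ≠ ⊥ → (0 : EReal) ≤ ν a := by
    intro a ha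
    rcases hval a with h | h
    · exact absurd h ha
    · exact h.1
  have hν1 : ∀ a, ν a ≤ 1 := by
    intro a
    rcases hval a with h | h
    · rw [h]; exact bot_le
    · exact h.2
  have hf0 : ∀ p : ℝ, asymProfile y p ≠ ⊥ → (0 : EReal) ≤ asymProfile y p := by
    intro p hp
    rcases asymProfile_bot_or_nonneg y p with h | h
    · exact absurd h hp
    · exact h
  -- step 3 : approximate pairs
  have step3 : ∀ n : ℕ, ∃ p q : ℝ,
      ((q + p - 1/((n:ℝ)+1) : ℝ) : EReal) < ν q ∧
      ((q + p - 1/((n:ℝ)+1) : ℝ) : EReal) < asymProfile y p := by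
    intro n
    set ε : ℝ := 1/((n:ℝ)+1) with hεdef
    have hεpos : 0 < ε := by positivity
    obtain ⟨p, hp⟩ := not_forall.mp (hy ε hεpos)
    have hp' : dualProfile ν (p - ε) < asymProfile y p := not_le.mp hp
    set A : Set ℝ := {a : ℝ | ((p - ε : ℝ) : EReal) < ν a - (a : EReal)} with hAdef
    set z : EReal := ((p - ε : ℝ) : EReal) + sInf ((fun a : ℝ => (a : EReal)) '' A) with hzdef
    have hfnb : asymProfile y p ≠ ⊥ := by
      intro hb
      rw [hb] at hp'
      exact absurd hp' (not_lt.mpr bot_le)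
    have hfnn : (0 : EReal) ≤ asymProfile y p := hf0 p hfnb
    have hf1 : asymProfile y p ≤ 1 := asymProfile_le_one y p
    have hfnt : asymProfile y p ≠ ⊤ := by
      intro ht
      rw [ht] at hf1
      exact absurd (top_le_iff.mp hf1) (EReal.coe_one ▸ EReal.coe_ne_top 1)
    set F : ℝ := (asymProfile y p).toReal with hFdef
    have hFcoe : asymProfile y p = ((F : ℝ) : EReal) := (EReal.coe_toReal hfnt hfnb).symm
    have hzlt : z < asymProfile y p := by
      have hclamp : clamp z < asymProfile y p := hp'
      unfold clamp at hclamp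
      split_ifs at hclamp with hz
      · exact lt_of_lt_of_le hz hfnn
      · rcases le_total z 1 with h1 | h1
        · rwa [min_eq_left h1] at hclamp
        · rw [min_eq_right h1] at hclamp
          exact absurd hf1 (not_le.mpr hclamp)
    have hsInf : sInf ((fun a : ℝ => (a : EReal)) '' A) < ((F - p + ε : ℝ) : EReal) := by
      by_contra hge
      push_neg at hge
      have h2 : ((p - ε : ℝ) : EReal) + ((F - p + ε : ℝ) : EReal) ≤ z := by
        rw [hzdef]
        exact add_le_add_right hge _
      have h3 : ((p - ε : ℝ) : EReal) + ((F - p + ε : ℝ) : EReal) = ((F : ℝ) : EReal) := by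
        rw [← EReal.coe_add]
        norm_num
      rw [h3] at h2
      rw [hFcoe] at hzlt
      exact absurd h2 (not_le.mpr hzlt)
    obtain ⟨w, hwmem, hwlt⟩ := sInf_lt_iff.mp hsInf
    obtain ⟨q, hqA, rfl⟩ := hwmem
    have hqlt : q < F - p + ε := EReal.coe_lt_coe_iff.mp hwlt
    have hνq : ((q + p - ε : ℝ) : EReal) < ν q := by
      by_contra hcon
      push_neg at hcon
      have h4 : ν q - (q : EReal) ≤ ((p - ε : ℝ) : EReal) := by
        have h5 := add_le_add_left hcon (-(q : EReal))
        have h6 : ((q + p - ε : ℝ) : EReal) + (-(q : EReal)) = ((p - ε : ℝ) : EReal) := by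
          rw [← EReal.coe_neg, ← EReal.coe_add]
          norm_cast
          ring
        rw [h6] at h5
        exact h5
      rw [hAdef] at hqA
      exact absurd hqA (not_lt.mpr h4)
    refine ⟨p, q, ?_, ?_⟩
    · exact hνq
    · rw [hFcoe]
      exact_mod_cast (by linarith : q + p - ε < F)
  choose P Q hQν hPf using step3
  have hfP : ∀ n, (0 : EReal) ≤ asymProfile y (P n) := by
    intro n
    refine hf0 (P n) ?_
    intro hb
    have h := hPf n
    rw [hb] at h
    exact absurd h (not_lt.mpr bot_le)
  have hνQ : ∀ n, (0 : EReal) ≤ ν (Q n) := by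
    intro n
    refine hν0 (Q n) ?_
    intro hb
    have h := hQν n
    rw [hb] at h
    exact absurd h (not_lt.mpr bot_le)
  by_cases hPb : ∀ r : ℝ, ∃ n, P n ≤ r
  · obtain ⟨a0, ha0⟩ := hne
    obtain ⟨n, hn⟩ := hPb (-a0)
    refine ⟨a0, 0, le_refl 0, ?_, ?_⟩
    · exact_mod_cast hν0 a0 ha0
    · have : asymProfile y (P n) ≤ asymProfile y (0 - a0) := asymProfile_mono y (by linarith)
      exact_mod_cast le_trans (hfP n) this
  · push_neg at hPb
    obtain ⟨r, hr⟩ := hPb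
    by_cases hQb : ∀ s : ℝ, ∃ n, Q n ≤ s
    · obtain ⟨n, hn⟩ := hQb (-(P 0))
      refine ⟨-(P 0), 0, le_refl 0, ?_, ?_⟩
      · have : ν (Q n) ≤ ν (-(P 0)) := hmono hn
        exact_mod_cast le_trans (hνQ n) this
      · have h00 : (0:ℝ) - (-(P 0)) = P 0 := by ring
        rw [h00]
        exact_mod_cast hfP 0
    · push_neg at hQb
      obtain ⟨s, hs⟩ := hQb
      -- boundedness
      have hsumb : ∀ n, Q n + P n < 2 := by
        intro n
        have h1 : ((Q n + P n - 1/((n:ℝ)+1) : ℝ) : EReal) < 1 := lt_of_lt_of_le (hQν n) (hν1 (Q n))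
        have h2 : (Q n + P n - 1/((n:ℝ)+1) : ℝ) < 1 := by exact_mod_cast h1
        have h3 : 1/((n:ℝ)+1) ≤ 1 := by
          rw [div_le_one (by positivity)]
          simp
        linarith
      have hPmem : ∀ n, P n ∈ Set.Icc r (2 - s) := by
        intro n
        exact ⟨(hr n).le, by linarith [hsumb n, (hs n).le]⟩
      have hQmem : ∀ n, Q n ∈ Set.Icc s (2 - r) := by
        intro n
        exact ⟨(hs n).le, by linarith [hsumb n, (hr n).le]⟩
      obtain ⟨pstar, -, φ₁, hφ₁mono, hφ₁t⟩ :=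
        tendsto_subseq_of_bounded (Metric.isBounded_Icc r (2 - s)) hPmem
      obtain ⟨qstar, -, φ₂, hφ₂mono, hφ₂t⟩ :=
        tendsto_subseq_of_bounded (Metric.isBounded_Icc s (2 - r)) (fun n => hQmem (φ₁ n))
      set ψ : ℕ → ℕ := φ₁ ∘ φ₂ with hψdef
      have hψmono : StrictMono ψ := hφ₁mono.comp hφ₂mono
      have hPt : Filter.Tendsto (fun n => P (ψ n)) Filter.atTop (nhds pstar) :=
        hφ₁t.comp hφ₂mono.tendsto_atTop
      have hQt : Filter.Tendsto (fun n => Q (ψ n)) Filter.atTop (nhds qstar) := hφ₂t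
      have hRt : Filter.Tendsto (fun n => Q (ψ n) + P (ψ n) - 1/((ψ n : ℝ)+1)) Filter.atTop
          (nhds (qstar + pstar)) := by
        have h1 : Filter.Tendsto (fun n => 1/((ψ n : ℝ)+1)) Filter.atTop (nhds 0) :=
          tendsto_one_div_add_atTop_nhds_zero_nat.comp hψmono.tendsto_atTop
        have h2 := (hQt.add hPt).sub h1
        simpa using h2
      have hRet : Filter.Tendsto (fun n => ((Q (ψ n) + P (ψ n) - 1/((ψ n : ℝ)+1) : ℝ) : EReal))
          Filter.atTop (nhds ((qstar + pstar : ℝ) : EReal)) :=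
        EReal.tendsto_coe.mpr hRt
      -- ν bound to the right of qstar
      have hνright : ∀ b : ℝ, qstar < b → ((qstar + pstar : ℝ) : EReal) ≤ ν b := by
        intro b hb
        refine le_of_tendsto hRet ?_
        have hev : ∀ᶠ n in Filter.atTop, Q (ψ n) < b := hQt.eventually_lt_const hb
        filter_upwards [hev] with n hn
        exact le_trans (hQν (ψ n)).le (hmono hn.le)
      have hνq : ((qstar + pstar : ℝ) : EReal) ≤ ν qstar := by
        have ht : Filter.Tendsto ν (nhdsWithin qstar (Set.Ioi qstar)) (nhds (ν qstar)) :=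
          (hrc qstar).mono_left (nhdsWithin_mono qstar Set.Ioi_subset_Ici_self)
        refine ge_of_tendsto ht ?_
        filter_upwards [eventually_mem_nhdsWithin] with b hb
        exact hνright b hb
      -- f bound at pstar
      have hfp : ((qstar + pstar : ℝ) : EReal) ≤ asymProfile y pstar := by
        refine le_sInf ?_
        rintro L ⟨ε, hε, rfl⟩
        have h1 : asymProfile y (pstar + ε/2) ≤ Filter.limsup (logCount y (pstar + ε)) Filter.atTop := by
          have h2 := asymProfile_le_limsup y (pstar + ε/2) (ε/2) (by linarith)
          rw [show pstar + ε/2 + ε/2 = pstar + ε by ring] at h2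
          exact h2
        refine le_trans ?_ h1
        refine le_of_tendsto hRet ?_
        have hev : ∀ᶠ n in Filter.atTop, P (ψ n) < pstar + ε/2 :=
          hPt.eventually_lt_const (by linarith)
        filter_upwards [hev] with n hn
        exact le_trans (hPf (ψ n)).le (asymProfile_mono y hn.le)
      -- assemble
      have hfnonneg : (0 : EReal) ≤ asymProfile y pstar := by
        refine hf0 pstar ?_
        intro hb
        rw [hb] at hfp
        exact absurd hfp (by simp)
      have hνnonneg : (0 : EReal) ≤ ν qstar := by
        refine hν0 qstar ?_
        intro hb
        rw [hb] at hνq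
        exact absurd hνq (by simp)
      have hcB : max 0 (qstar + pstar) - max qstar (-pstar) = pstar := by
        rcases le_total 0 (qstar + pstar) with h | h
        · rw [max_eq_right h, max_eq_left (by linarith : -pstar ≤ qstar)]
          ring
        · rw [max_eq_left h, max_eq_right (by linarith : qstar ≤ -pstar)]
          ring
      refine ⟨max qstar (-pstar), max 0 (qstar + pstar), le_max_left 0 _, ?_, ?_⟩
      · have hm : ν qstar ≤ ν (max qstar (-pstar)) := hmono (le_max_left _ _)
        rcases le_total 0 (qstar + pstar) with h | h
        · rw [max_eq_right h]
          exact le_trans hνq hm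
        · rw [max_eq_left h]
          exact_mod_cast le_trans hνnonneg hm
      · rw [hcB]
        rcases le_total 0 (qstar + pstar) with h | h
        · rw [max_eq_right h]
          exact hfp
        · rw [max_eq_left h]
          exact_mod_cast hfnonneg

theorem stmt18 (ν : ℝ → EReal)
    (hmono : Monotone ν)
    (hrc : ∀ a : ℝ, ContinuousWithinAt ν (Set.Ici a) a)
    (hval : ∀ a : ℝ, ν a = ⊥ ∨ (0 ≤ ν a ∧ ν a ≤ 1))
    (hne : ∃ a : ℝ, ν a ≠ ⊥)
    (y : ∀ j : ℕ, Fin (2 ^ j) → ℂ)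
    (hy : ∀ ε : ℝ, 0 < ε → ¬ (∀ α : ℝ, asymProfile y α ≤ dualProfile ν (α - ε))) :
    ∃ x : ∀ j : ℕ, Fin (2 ^ j) → ℂ,
      (∀ α : ℝ, asymProfile x α ≤ ν α) ∧
      ¬ BddAbove (Set.range fun J : ℕ =>
        ∑ j ∈ Finset.range J, ∑ k : Fin (2 ^ j),
          (x j k * (starRingEnd ℂ) (y j k)).re) := by
  obtain ⟨B, c, hc, hnu, hf⟩ := claim ν hmono hrc hval hne y hy
  exact construction ν hmono y B c hc hnu hf
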